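/- Let σ ≥ 0 be a positive semidefinite matrix and define J_σ(X) = (σX + Xσ)/2. Then the equation J_σ(Z) = Y has a Hermitian solution Z if and only if Π⊥ Y Π⊥ = 0, where Π⊥ is the orthogonal projection onto the kernel of σ. -/

import Mathlib

open Matrix
open scoped ComplexOrder

/-- For positive semidefinite `σ` and Hermitian `Y`, the Lyapunov-type equation
`J_σ(Z) = (σZ + Zσ)/2 = Y` has a Hermitian solution `Z` if and only if
`Π⊥ Y Π⊥ = 0`, where `Π⊥` is the orthogonal projection onto `ker σ`
(expressed here as: `Y` is zero as a quadratic form on vectors in the kernel of `σ`). -/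
theorem exists_hermitian_solution_iff_kernel_block_zero
    {n : Type*} [Fintype n] [DecidableEq n] (σ Y : Matrix n n ℂ)
    (hσ : σ.PosSemidef) (hY : Y.IsHermitian) :
    (∃ Z : Matrix n n ℂ, Z.IsHermitian ∧ σ * Z + Z * σ = (2 : ℂ) • Y) ↔
      (∀ v w : n → ℂ, σ *ᵥ v = 0 → σ *ᵥ w = 0 → star v ⬝ᵥ (Y *ᵥ w) = 0) := by
  have hσH : σ.IsHermitian := hσ.1
  constructor
  · rintro ⟨Z, hZ, hEq⟩ v w hv hw
    have h1 : star v ⬝ᵥ ((σ * Z) *ᵥ w) = 0 := by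
      rw [← mulVec_mulVec, dotProduct_mulVec]
      have hvs : star v ᵥ* σ = 0 := by
        rw [show σ = σᴴ from hσH.symm, ← star_mulVec, hv]
        simp
      rw [hvs]
      simp
    have h2 : star v ⬝ᵥ ((Z * σ) *ᵥ w) = 0 := by
      rw [← mulVec_mulVec, hw]
      simp
    have := congrArg (fun M => star v ⬝ᵥ (M *ᵥ w)) hEq
    simp only [add_mulVec, dotProduct_add, h1, h2, smul_mulVec,
      dotProduct_smul, smul_eq_mul, zero_add] at this
    have h2ne : (2 : ℂ) ≠ 0 := two_ne_zero
    exact (mul_eq_zero.mp this.symm).resolve_left h2ne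
  · intro h
    set U : Matrix n n ℂ := (hσH.eigenvectorUnitary : Matrix n n ℂ) with hU
    set d : n → ℝ := hσH.eigenvalues with hd
    have hUU : star U * U = 1 := Matrix.mem_unitaryGroup_iff'.mp hσH.eigenvectorUnitary.2
    have hUU' : U * star U = 1 := Matrix.mem_unitaryGroup_iff.mp hσH.eigenvectorUnitary.2
    set D : Matrix n n ℂ := diagonal (fun i => (d i : ℂ)) with hD
    have hspec : σ = U * D * star U := by
      have := hσH.spectral_theorem
      rw [this, Unitary.conjStarAlgAut_apply]; rfl
    set Yh : Matrix n n ℂ := star U * Y * U with hYh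
    -- columns of U are eigenvectors
    have hcol : ∀ i, (fun k => U k i) = ⇑(hσH.eigenvectorBasis i) := by
      intro i
      funext k
      exact hσH.eigenvectorUnitary_apply k i
    have heig : ∀ i, σ *ᵥ (fun k => U k i) = (d i : ℝ) • (fun k => U k i) := by
      intro i
      rw [hcol i]
      exact hσH.mulVec_eigenvectorBasis i
    have hYhEntry : ∀ i j, Yh i j = star (fun k => U k i) ⬝ᵥ (Y *ᵥ (fun k => U k j)) := by
      intro i j
      simp only [hYh, mul_apply, dotProduct, mulVec, dotProduct, star_apply,
        Pi.star_apply, Finset.sum_mul, Finset.mul_sum]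
      rw [Finset.sum_comm]
      apply Finset.sum_congr rfl
      intro k _
      apply Finset.sum_congr rfl
      intro l _
      simp [star_apply, RCLike.star_def]
      ring
    -- the kernel block of Yh vanishes
    have hker : ∀ i j, d i + d j = 0 → Yh i j = 0 := by
      intro i j hij
      have hi : d i = 0 := by
        have := hσ.eigenvalues_nonneg i
        have := hσ.eigenvalues_nonneg j
        linarith
      have hj : d j = 0 := by
        have := hσ.eigenvalues_nonneg i
        linarith
      have hvi : σ *ᵥ (fun k => U k i) = 0 := by
        rw [heig i, hi]; simp
      have hvj : σ *ᵥ (fun k => U k j) = 0 := by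
        rw [heig j, hj]; simp
      rw [hYhEntry i j]
      exact h _ _ hvi hvj
    have hYhHerm : Yh.IsHermitian := by
      rw [hYh, star_eq_conjTranspose]
      exact isHermitian_conjTranspose_mul_mul U hY
    -- construct the solution in the eigenbasis
    set Zh : Matrix n n ℂ := fun i j =>
      if d i + d j = 0 then 0 else (((d i + d j : ℝ) : ℂ))⁻¹ * (2 * Yh i j) with hZh
    have hZhHerm : Zh.IsHermitian := by
      ext i j
      rw [conjTranspose_apply]; simp only [hZh]
      by_cases hij : d i + d j = 0
      · rw [if_pos (by linarith), if_pos hij]; simp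
      · rw [if_neg (by intro hc; exact hij (by linarith)), if_neg hij]
        have h1 : (starRingEnd ℂ) (Yh j i) = Yh i j := congrFun (congrFun hYhHerm i) j
        simp only [RCLike.star_def, _root_.map_mul, map_inv₀, map_add, map_ofNat,
          Complex.conj_ofReal, h1]
        ring
    have hkey : D * Zh + Zh * D = (2 : ℂ) • Yh := by
      ext i j
      simp only [Matrix.add_apply, Matrix.smul_apply, smul_eq_mul, hD, diagonal_mul, mul_diagonal]; simp only [hZh]
      by_cases hij : d i + d j = 0
      · rw [if_pos hij, hker i j hij]
        simp
      · rw [if_neg hij]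
        have hne : ((d i + d j : ℝ) : ℂ) ≠ 0 := by
          exact_mod_cast Complex.ofReal_ne_zero.mpr hij
        push_cast at hne ⊢
        field_simp
    refine ⟨U * Zh * star U, ?_, ?_⟩
    · simp only [IsHermitian, star_eq_conjTranspose, conjTranspose_mul,
        conjTranspose_conjTranspose]
      rw [show Zhᴴ = Zh from hZhHerm, mul_assoc]
    · have e1 : σ * (U * Zh * star U) = U * (D * Zh) * star U := by
        rw [hspec]
        simp only [Matrix.mul_assoc]
        rw [← Matrix.mul_assoc (star U) U, hUU, Matrix.one_mul]
      have e2 : (U * Zh * star U) * σ = U * (Zh * D) * star U := by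
        rw [hspec]
        simp only [Matrix.mul_assoc]
        rw [← Matrix.mul_assoc (star U) U, hUU, Matrix.one_mul]
      rw [e1, e2, ← Matrix.add_mul, ← Matrix.mul_add, hkey]
      rw [Matrix.mul_smul, Matrix.smul_mul]
      congr 1
      rw [hYh]
      simp only [← Matrix.mul_assoc, hUU']
      rw [Matrix.one_mul, Matrix.mul_assoc, hUU', Matrix.mul_one]
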